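/- (Convergence of the IMEX scheme, case ζ = γ) Let n_ξ ≥ 2, n_x ≥ 1 be integers, γ, ν, τ, h_ξ > 0 reals, A = (1+γτ) I_{n_ξ} − (τν/h_ξ²) Δ with Δ the n_ξ×n_ξ Neumann finite-difference Laplacian matrix. Let N : ℝ^{n_ξ×n_x} → ℝ^{n_ξ×n_x} satisfy |N(V) − N(U)|_∞ ≤ ζ |V − U|_∞ for all V, U, with constant ζ ≥ 0. Let (V^n) and (V_*^n) be sequences in ℝ^{n_ξ×n_x} with V^0 = V_*^0, satisfying A V^n = V^{n−1} + τ N(V^{n−1}) + τ G^{n−1} and A V_*^n = V_*^{n−1} + τ N(V_*^{n−1}) + τ G^{n−1} + τ R^{n−1} for all n ≥ 1, where |R^{n−1}|_∞ ≤ ω for a constant ω ≥ 0. If ζ = γ, then for every n with 1 ≤ n ≤ n_t one has |V^n − V_*^n|_∞ ≤ T ω/(1 + γτ), where T = n_t τ. -/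

import Mathlib

open Real Finset

/-- The `n × n` second-order centred finite-difference Laplacian incorporating
Neumann boundary conditions. -/
def neumannLaplacian (n : ℕ) : Matrix (Fin n) (Fin n) ℝ :=
  Matrix.of fun i j =>
    if (i : ℕ) = (j : ℕ) then -2
    else if (i : ℕ) = 0 ∧ (j : ℕ) = 1 then 2
    else if (i : ℕ) = n - 1 ∧ (j : ℕ) = n - 2 then 2
    else if (j : ℕ) + 1 = (i : ℕ) ∨ (i : ℕ) + 1 = (j : ℕ) then 1
    else 0

/-- The matrix norm induced by the vector `∞`-norm:
`|M|_∞ = max_i Σ_j |M i j|`. -/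
noncomputable def matInfNorm {m n : ℕ} (M : Matrix (Fin m) (Fin n) ℝ) : ℝ :=
  ⨆ i, ∑ j, |M i j|

lemma lap_diag {n : ℕ} (i : Fin n) : neumannLaplacian n i i = -2 := by
  simp [neumannLaplacian]

lemma lap_row_sum {n : ℕ} (hn : 2 ≤ n) (i : Fin n) :
    ∑ j ∈ Finset.univ.erase i, |neumannLaplacian n i j| ≤ 2 := by
  have h1n : (1:ℕ) < n := hn
  rcases Nat.lt_or_ge (i:ℕ) 1 with h0 | h1
  · have hi0 : (i:ℕ) = 0 := by omega
    calc ∑ j ∈ Finset.univ.erase i, |neumannLaplacian n i j|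
        ≤ ∑ j ∈ Finset.univ.erase i, (if j = (⟨1, h1n⟩:Fin n) then (2:ℝ) else 0) := by
          apply Finset.sum_le_sum
          intro j hj
          have hji : (j:ℕ) ≠ (i:ℕ) := fun h => (Finset.ne_of_mem_erase hj) (Fin.ext h)
          by_cases hj1 : j = (⟨1, h1n⟩:Fin n)
          · have hjv : (j:ℕ) = 1 := by rw [hj1]
            have hv : neumannLaplacian n i j = 2 := by
              simp only [neumannLaplacian, Matrix.of_apply]
              split_ifs <;> first | rfl | omega
            rw [hv, if_pos hj1]; norm_num
          · have hjv : (j:ℕ) ≠ 1 := fun h => hj1 (Fin.ext h)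
            have hv : neumannLaplacian n i j = 0 := by
              simp only [neumannLaplacian, Matrix.of_apply]
              split_ifs <;> first | rfl | omega
            rw [hv, if_neg hj1]; norm_num
      _ = 2 := by
          rw [Finset.sum_ite_eq']
          have hmem : (⟨1, h1n⟩:Fin n) ∈ Finset.univ.erase i := by
            refine Finset.mem_erase.2 ⟨?_, Finset.mem_univ _⟩
            intro h
            have h' : (1:ℕ) = (i:ℕ) := by simpa using congrArg Fin.val h
            omega
          rw [if_pos hmem]
  · rcases Nat.lt_or_ge (i:ℕ) (n-1) with hlt | hge
    · -- interior
      have hp : (i:ℕ) - 1 < n := by omega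
      have hq : (i:ℕ) + 1 < n := by omega
      calc ∑ j ∈ Finset.univ.erase i, |neumannLaplacian n i j|
          ≤ ∑ j ∈ Finset.univ.erase i,
              ((if j = (⟨(i:ℕ)-1, hp⟩:Fin n) then (1:ℝ) else 0)
               + (if j = (⟨(i:ℕ)+1, hq⟩:Fin n) then (1:ℝ) else 0)) := by
            apply Finset.sum_le_sum
            intro j hj
            have hji : (j:ℕ) ≠ (i:ℕ) := fun h => (Finset.ne_of_mem_erase hj) (Fin.ext h)
            by_cases hjp : j = (⟨(i:ℕ)-1, hp⟩:Fin n)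
            · have hjv : (j:ℕ) = (i:ℕ) - 1 := by rw [hjp]
              have hne : j ≠ (⟨(i:ℕ)+1, hq⟩:Fin n) := by
                intro h
                have : (j:ℕ) = (i:ℕ)+1 := by rw [h]
                omega
              have hv : neumannLaplacian n i j = 1 := by
                simp only [neumannLaplacian, Matrix.of_apply]
                split_ifs <;> first | rfl | omega
              rw [hv, if_pos hjp, if_neg hne]; norm_num
            · by_cases hjq : j = (⟨(i:ℕ)+1, hq⟩:Fin n)
              · have hjv : (j:ℕ) = (i:ℕ) + 1 := by rw [hjq]
                have hv : neumannLaplacian n i j = 1 := by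
                  simp only [neumannLaplacian, Matrix.of_apply]
                  split_ifs <;> first | rfl | omega
                rw [hv, if_neg hjp, if_pos hjq]; norm_num
              · have hv1 : (j:ℕ) ≠ (i:ℕ) - 1 := fun h => hjp (Fin.ext h)
                have hv2 : (j:ℕ) ≠ (i:ℕ) + 1 := fun h => hjq (Fin.ext h)
                have hv : neumannLaplacian n i j = 0 := by
                  simp only [neumannLaplacian, Matrix.of_apply]
                  split_ifs <;> first | rfl | omega
                rw [hv, if_neg hjp, if_neg hjq]; norm_num
        _ ≤ 2 := by
            rw [Finset.sum_add_distrib, Finset.sum_ite_eq', Finset.sum_ite_eq']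
            have e1 : ((⟨(i:ℕ)-1, hp⟩:Fin n) ∈ Finset.univ.erase i) := by
              refine Finset.mem_erase.2 ⟨?_, Finset.mem_univ _⟩
              intro h
              have h' : ((i:ℕ)-1) = (i:ℕ) := by simpa using congrArg Fin.val h
              omega
            have e2 : ((⟨(i:ℕ)+1, hq⟩:Fin n) ∈ Finset.univ.erase i) := by
              refine Finset.mem_erase.2 ⟨?_, Finset.mem_univ _⟩
              intro h
              have h' : ((i:ℕ)+1) = (i:ℕ) := by simpa using congrArg Fin.val h
              omega
            rw [if_pos e1, if_pos e2]; norm_num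
    · -- i = n-1
      have hi : (i:ℕ) = n - 1 := by have := i.isLt; omega
      have hp : n - 2 < n := by omega
      calc ∑ j ∈ Finset.univ.erase i, |neumannLaplacian n i j|
          ≤ ∑ j ∈ Finset.univ.erase i, (if j = (⟨n-2, hp⟩:Fin n) then (2:ℝ) else 0) := by
            apply Finset.sum_le_sum
            intro j hj
            have hji : (j:ℕ) ≠ (i:ℕ) := fun h => (Finset.ne_of_mem_erase hj) (Fin.ext h)
            have hjlt := j.isLt
            by_cases hj1 : j = (⟨n-2, hp⟩:Fin n)
            · have hjv : (j:ℕ) = n - 2 := by rw [hj1]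
              have hv : neumannLaplacian n i j = 2 := by
                simp only [neumannLaplacian, Matrix.of_apply]
                split_ifs <;> first | rfl | omega
              rw [hv, if_pos hj1]; norm_num
            · have hjv : (j:ℕ) ≠ n - 2 := fun h => hj1 (Fin.ext h)
              have hv : neumannLaplacian n i j = 0 := by
                simp only [neumannLaplacian, Matrix.of_apply]
                split_ifs <;> first | rfl | omega
              rw [hv, if_neg hj1]; norm_num
        _ = 2 := by
            rw [Finset.sum_ite_eq']
            have hmem : (⟨n-2, hp⟩:Fin n) ∈ Finset.univ.erase i := by
              refine Finset.mem_erase.2 ⟨?_, Finset.mem_univ _⟩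
              intro h
              have h' : (n-2:ℕ) = (i:ℕ) := by simpa using congrArg Fin.val h
              omega
            rw [if_pos hmem]



lemma rowSum_le_matInfNorm {m n : ℕ} (M : Matrix (Fin m) (Fin n) ℝ) (i : Fin m) :
    ∑ j, |M i j| ≤ matInfNorm M :=
  le_ciSup (Set.Finite.bddAbove (Set.finite_range fun i => ∑ j, |M i j|)) i

lemma matInfNorm_le {m n : ℕ} [NeZero m] (M : Matrix (Fin m) (Fin n) ℝ) (c : ℝ)
    (h : ∀ i, ∑ j, |M i j| ≤ c) : matInfNorm M ≤ c := ciSup_le h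

lemma matInfNorm_nonneg {m n : ℕ} [NeZero m] (M : Matrix (Fin m) (Fin n) ℝ) :
    0 ≤ matInfNorm M := by
  refine le_trans ?_ (rowSum_le_matInfNorm M ⟨0, Nat.pos_of_ne_zero (NeZero.ne m)⟩)
  exact Finset.sum_nonneg fun j _ => abs_nonneg _

lemma matInfNorm_add_le {m n : ℕ} [NeZero m] (M N : Matrix (Fin m) (Fin n) ℝ) :
    matInfNorm (M + N) ≤ matInfNorm M + matInfNorm N := by
  apply matInfNorm_le
  intro i
  calc ∑ j, |(M + N) i j| ≤ ∑ j, (|M i j| + |N i j|) :=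
        Finset.sum_le_sum fun j _ => by simpa [Matrix.add_apply] using abs_add_le (M i j) (N i j)
    _ = (∑ j, |M i j|) + ∑ j, |N i j| := Finset.sum_add_distrib
    _ ≤ matInfNorm M + matInfNorm N :=
        add_le_add (rowSum_le_matInfNorm M i) (rowSum_le_matInfNorm N i)

lemma matInfNorm_sub_le {m n : ℕ} [NeZero m] (M N : Matrix (Fin m) (Fin n) ℝ) :
    matInfNorm (M - N) ≤ matInfNorm M + matInfNorm N := by
  apply matInfNorm_le
  intro i
  calc ∑ j, |(M - N) i j| ≤ ∑ j, (|M i j| + |N i j|) :=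
        Finset.sum_le_sum fun j _ => by simpa [Matrix.sub_apply] using abs_sub (M i j) (N i j)
    _ = (∑ j, |M i j|) + ∑ j, |N i j| := Finset.sum_add_distrib
    _ ≤ matInfNorm M + matInfNorm N :=
        add_le_add (rowSum_le_matInfNorm M i) (rowSum_le_matInfNorm N i)

lemma matInfNorm_smul_le {m n : ℕ} [NeZero m] (c : ℝ) (hc : 0 ≤ c)
    (M : Matrix (Fin m) (Fin n) ℝ) : matInfNorm (c • M) ≤ c * matInfNorm M := by
  apply matInfNorm_le
  intro i
  calc ∑ j, |(c • M) i j| = c * ∑ j, |M i j| := by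
        rw [Finset.mul_sum]
        exact Finset.sum_congr rfl fun j _ => by
          simp [Matrix.smul_apply, abs_mul, abs_of_nonneg hc]
    _ ≤ c * matInfNorm M := mul_le_mul_of_nonneg_left (rowSum_le_matInfNorm M i) hc

lemma coercive {m n : ℕ} (hm : 2 ≤ m) (a c : ℝ) (ha : 0 < a) (hc : 0 ≤ c)
    (A : Matrix (Fin m) (Fin m) ℝ)
    (hA : A = a • (1 : Matrix (Fin m) (Fin m) ℝ) - c • neumannLaplacian m)
    (E : Matrix (Fin m) (Fin n) ℝ) :
    a * matInfNorm E ≤ matInfNorm (A * E) := by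
  haveI : NeZero m := ⟨by omega⟩
  obtain ⟨i, hi⟩ := Finite.exists_max (fun i : Fin m => ∑ k, |E i k|)
  have hEnorm : matInfNorm E = ∑ k, |E i k| :=
    le_antisymm (ciSup_le hi) (rowSum_le_matInfNorm E i)
  have hri : 0 ≤ ∑ k, |E i k| := Finset.sum_nonneg fun k _ => abs_nonneg _
  have hAii : A i i = a + 2 * c := by
    rw [hA]
    simp [Matrix.sub_apply, Matrix.smul_apply, Matrix.one_apply, lap_diag]
    ring
  have hAij : ∀ j, j ≠ i → |A i j| = c * |neumannLaplacian m i j| := by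
    intro j hj
    rw [hA]
    simp only [Matrix.sub_apply, Matrix.smul_apply, Matrix.one_apply,
      if_neg (fun h => hj (h ▸ rfl) : ¬ i = j), smul_eq_mul, mul_zero, mul_one, zero_sub,
      abs_neg, abs_mul, abs_of_nonneg hc]
  -- pointwise bound for each column k
  have key : ∀ k, (a + 2*c) * |E i k| ≤
      |(A * E) i k| + ∑ j ∈ Finset.univ.erase i, (c * |neumannLaplacian m i j|) * |E j k| := by
    intro k
    have hmul : (A * E) i k = (∑ j ∈ Finset.univ.erase i, A i j * E j k) + A i i * E i k := by
      rw [Matrix.mul_apply]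
      exact (Finset.sum_erase_add _ _ (Finset.mem_univ i)).symm
    have h1 : |A i i * E i k| ≤ |(A * E) i k| +
        |∑ j ∈ Finset.univ.erase i, A i j * E j k| := by
      rw [hmul]
      calc |A i i * E i k|
          = |((∑ j ∈ Finset.univ.erase i, A i j * E j k) + A i i * E i k)
              - ∑ j ∈ Finset.univ.erase i, A i j * E j k| := by ring_nf
        _ ≤ _ := abs_sub _ _
    have h2 : |∑ j ∈ Finset.univ.erase i, A i j * E j k| ≤
        ∑ j ∈ Finset.univ.erase i, (c * |neumannLaplacian m i j|) * |E j k| := by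
      refine le_trans (Finset.abs_sum_le_sum_abs _ _) (Finset.sum_le_sum ?_)
      intro j hj
      rw [abs_mul, hAij j (Finset.ne_of_mem_erase hj)]
    have h3 : |A i i * E i k| = (a + 2*c) * |E i k| := by
      rw [abs_mul, hAii, abs_of_nonneg (by linarith : (0:ℝ) ≤ a + 2*c)]
    linarith
  -- sum over k
  have hsum : (a + 2*c) * (∑ k, |E i k|) ≤
      (∑ k, |(A * E) i k|) + 2 * c * (∑ k, |E i k|) := by
    have hswap : ∑ k, ∑ j ∈ Finset.univ.erase i, (c * |neumannLaplacian m i j|) * |E j k|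
        = ∑ j ∈ Finset.univ.erase i, (c * |neumannLaplacian m i j|) * ∑ k, |E j k| := by
      rw [Finset.sum_comm]
      exact Finset.sum_congr rfl fun j _ => by rw [Finset.mul_sum]
    have hbound : ∑ j ∈ Finset.univ.erase i, (c * |neumannLaplacian m i j|) * ∑ k, |E j k|
        ≤ 2 * c * (∑ k, |E i k|) := by
      calc ∑ j ∈ Finset.univ.erase i, (c * |neumannLaplacian m i j|) * ∑ k, |E j k|
          ≤ ∑ j ∈ Finset.univ.erase i, (c * |neumannLaplacian m i j|) * ∑ k, |E i k| := by
            refine Finset.sum_le_sum fun j _ => ?_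
            exact mul_le_mul_of_nonneg_left (hi j)
              (mul_nonneg hc (abs_nonneg _))
        _ = (∑ j ∈ Finset.univ.erase i, |neumannLaplacian m i j|) * (c * ∑ k, |E i k|) := by
            rw [Finset.sum_mul]
            exact Finset.sum_congr rfl fun j _ => by ring
        _ ≤ 2 * (c * ∑ k, |E i k|) := by
            exact mul_le_mul_of_nonneg_right (lap_row_sum hm i) (mul_nonneg hc hri)
        _ = 2 * c * (∑ k, |E i k|) := by ring
    calc (a + 2*c) * (∑ k, |E i k|) = ∑ k, (a + 2*c) * |E i k| := Finset.mul_sum _ _ _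
      _ ≤ ∑ k, (|(A * E) i k| +
            ∑ j ∈ Finset.univ.erase i, (c * |neumannLaplacian m i j|) * |E j k|) :=
          Finset.sum_le_sum fun k _ => key k
      _ = (∑ k, |(A * E) i k|) +
            ∑ k, ∑ j ∈ Finset.univ.erase i, (c * |neumannLaplacian m i j|) * |E j k| :=
          Finset.sum_add_distrib
      _ ≤ (∑ k, |(A * E) i k|) + 2 * c * (∑ k, |E i k|) := by
          rw [hswap]; linarith
  have hfin : a * (∑ k, |E i k|) ≤ ∑ k, |(A * E) i k| := by linarith
  rw [hEnorm]
  exact le_trans hfin (rowSum_le_matInfNorm _ i)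

/-- (Convergence of the IMEX scheme, case `ζ = γ`.)
`|Vⁿ - V*ⁿ|_∞ ≤ T ω/(1 + γτ)` for `1 ≤ n ≤ n_t`, where `T = n_t τ`. -/
theorem IMEX_convergence_critical (nξ nx : ℕ) (hnξ : 2 ≤ nξ) (hnx : 1 ≤ nx)
    (γ ν τ hξ ζ ω : ℝ) (hγ : 0 < γ) (hν : 0 < ν) (hτ : 0 < τ) (hhξ : 0 < hξ)
    (hζ : 0 ≤ ζ) (hω : 0 ≤ ω)
    (A : Matrix (Fin nξ) (Fin nξ) ℝ)
    (hA : A = (1 + γ * τ) • (1 : Matrix (Fin nξ) (Fin nξ) ℝ)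
            - (τ * ν / hξ ^ 2) • neumannLaplacian nξ)
    (N : Matrix (Fin nξ) (Fin nx) ℝ → Matrix (Fin nξ) (Fin nx) ℝ)
    (hN : ∀ V U, matInfNorm (N V - N U) ≤ ζ * matInfNorm (V - U))
    (V Vs G R : ℕ → Matrix (Fin nξ) (Fin nx) ℝ)
    (h0 : V 0 = Vs 0)
    (hV : ∀ n : ℕ, A * V (n + 1) = V n + τ • N (V n) + τ • G n)
    (hVs : ∀ n : ℕ, A * Vs (n + 1) = Vs n + τ • N (Vs n) + τ • G n + τ • R n)
    (hR : ∀ n : ℕ, matInfNorm (R n) ≤ ω)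
    (hζγ : ζ = γ) (nt : ℕ) (T : ℝ) (hT : T = nt * τ) :
    ∀ n : ℕ, 1 ≤ n → n ≤ nt →
      matInfNorm (V n - Vs n) ≤ T * ω / (1 + γ * τ) := by
  haveI : NeZero nξ := ⟨by omega⟩
  have ha : (0:ℝ) < 1 + γ * τ := by nlinarith
  have hane : (1 + γ * τ) ≠ 0 := ne_of_gt ha
  have hc : (0:ℝ) ≤ τ * ν / hξ ^ 2 :=
    div_nonneg (mul_nonneg hτ.le hν.le) (by positivity)
  have hrec : ∀ n, A * (V (n+1) - Vs (n+1))
      = (V n - Vs n) + τ • (N (V n) - N (Vs n)) - τ • R n := by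
    intro n
    rw [Matrix.mul_sub, hV n, hVs n]
    simp only [smul_sub]
    abel
  have step : ∀ n, matInfNorm (V (n+1) - Vs (n+1))
      ≤ matInfNorm (V n - Vs n) + τ * ω / (1 + γ * τ) := by
    intro n
    set X := matInfNorm (V (n+1) - Vs (n+1)) with hX
    set Y := matInfNorm (V n - Vs n) with hY
    have h1 := coercive hnξ (1 + γ * τ) (τ * ν / hξ ^ 2) ha hc A hA (V (n+1) - Vs (n+1))
    rw [hrec n] at h1
    have h2 : matInfNorm ((V n - Vs n) + τ • (N (V n) - N (Vs n)) - τ • R n)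
        ≤ Y + τ * (γ * Y) + τ * ω := by
      calc matInfNorm ((V n - Vs n) + τ • (N (V n) - N (Vs n)) - τ • R n)
          ≤ matInfNorm ((V n - Vs n) + τ • (N (V n) - N (Vs n))) + matInfNorm (τ • R n) :=
            matInfNorm_sub_le _ _
        _ ≤ (matInfNorm (V n - Vs n) + matInfNorm (τ • (N (V n) - N (Vs n))))
              + matInfNorm (τ • R n) :=
            add_le_add (matInfNorm_add_le _ _) le_rfl
        _ ≤ (Y + τ * (γ * Y)) + τ * ω := by
            refine add_le_add (add_le_add le_rfl ?_) ?_
            · refine le_trans (matInfNorm_smul_le τ hτ.le _) ?_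
              refine mul_le_mul_of_nonneg_left ?_ hτ.le
              have := hN (V n) (Vs n)
              rw [hζγ] at this
              exact this
            · exact le_trans (matInfNorm_smul_le τ hτ.le _)
                (mul_le_mul_of_nonneg_left (hR n) hτ.le)
        _ = Y + τ * (γ * Y) + τ * ω := by ring
    have h3 : (1 + γ * τ) * X ≤ (1 + γ * τ) * Y + τ * ω := by
      have e : Y + τ * (γ * Y) + τ * ω = (1 + γ * τ) * Y + τ * ω := by ring
      linarith [le_trans h1 h2]
    have h4 : X ≤ ((1 + γ * τ) * Y + τ * ω) / (1 + γ * τ) := by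
      rw [le_div_iff₀ ha]
      linarith [h3]
    calc X ≤ ((1 + γ * τ) * Y + τ * ω) / (1 + γ * τ) := h4
      _ = Y + τ * ω / (1 + γ * τ) := by field_simp
  have hq : (0:ℝ) ≤ τ * ω / (1 + γ * τ) := div_nonneg (mul_nonneg hτ.le hω) ha.le
  have bound : ∀ n : ℕ, matInfNorm (V n - Vs n) ≤ n * (τ * ω / (1 + γ * τ)) := by
    intro n
    induction n with
    | zero =>
        rw [h0, sub_self]
        simp [matInfNorm]
    | succ n ih =>
        calc matInfNorm (V (n+1) - Vs (n+1))
            ≤ matInfNorm (V n - Vs n) + τ * ω / (1 + γ * τ) := step n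
          _ ≤ n * (τ * ω / (1 + γ * τ)) + τ * ω / (1 + γ * τ) := add_le_add ih le_rfl
          _ = (n + 1 : ℕ) * (τ * ω / (1 + γ * τ)) := by push_cast; ring
  intro n _ hn
  calc matInfNorm (V n - Vs n) ≤ n * (τ * ω / (1 + γ * τ)) := bound n
    _ ≤ nt * (τ * ω / (1 + γ * τ)) := by
        exact mul_le_mul_of_nonneg_right (by exact_mod_cast Nat.cast_le.2 hn) hq
    _ = T * ω / (1 + γ * τ) := by rw [hT]; ring
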